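/- The second-to-last OLS coefficient has the closed form β̂_{p-1} = (q_{p-1}^o)^T [I - x_p (q_p^o)^T] y, where q_i^o = q_i/⟨q_i,q_i⟩. -/

import Mathlib

open Matrix

/-- Simplified (non-normalized) Gram–Schmidt process. -/
noncomputable def gs {n p : ℕ} (x : Fin p → Fin n → ℝ) (i : Fin p) : Fin n → ℝ :=
  x i - ∑ j : Fin p, if h : j < i then ((gs x j ⬝ᵥ x i) / (gs x j ⬝ᵥ gs x j)) • gs x j else 0
termination_by i.1
decreasing_by exact h

lemma my_dotProduct_sum {n : ℕ} {ι : Type*} (v : Fin n → ℝ) (s : Finset ι) (f : ι → Fin n → ℝ) :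
    v ⬝ᵥ (∑ k ∈ s, f k) = ∑ k ∈ s, v ⬝ᵥ f k := by
  simp only [dotProduct, Finset.sum_apply, Finset.mul_sum]
  exact Finset.sum_comm

lemma my_sum_dotProduct {n : ℕ} {ι : Type*} (v : Fin n → ℝ) (s : Finset ι) (f : ι → Fin n → ℝ) :
    (∑ k ∈ s, f k) ⬝ᵥ v = ∑ k ∈ s, f k ⬝ᵥ v := by
  simp only [dotProduct, Finset.sum_apply, Finset.sum_mul]
  exact Finset.sum_comm

lemma gs_combo {n p : ℕ} (x : Fin p → Fin n → ℝ) :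
    ∀ i : Fin p, ∃ c : Fin p → ℝ, c i = 1 ∧ (∀ j, i < j → c j = 0) ∧ gs x i = ∑ j, c j • x j := by
  suffices H : ∀ N : ℕ, ∀ i : Fin p, i.1 = N →
      ∃ c : Fin p → ℝ, c i = 1 ∧ (∀ j, i < j → c j = 0) ∧ gs x i = ∑ j, c j • x j from
    fun i => H i.1 i rfl
  intro N
  induction N using Nat.strong_induction_on with
  | _ N IH =>
    intro i hi
    subst hi
    choose c hc1 hc2 hc3 using fun j (h : j < i) => IH j.1 h j rfl
    classical
    set a : Fin p → ℝ := fun j => (gs x j ⬝ᵥ x i) / (gs x j ⬝ᵥ gs x j) with ha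
    refine ⟨(fun j => if j = i then 1 else 0) -
      ∑ j : Fin p, if h : j < i then a j • c j h else 0, ?_, ?_, ?_⟩
    · have hz : ∀ j : Fin p, (if h : j < i then a j • c j h else 0) i = 0 := by
        intro j
        split
        · rename_i h; simp [hc2 j h i h]
        · rfl
      simp only [Pi.sub_apply, if_pos rfl, Finset.sum_apply]
      rw [Finset.sum_congr rfl fun j _ => hz j]
      simp
    · intro j hj
      have hji : j ≠ i := fun h => absurd hj (by simp [h])
      have hz : ∀ k : Fin p, (if h : k < i then a k • c k h else 0) j = 0 := by
        intro k
        split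
        · rename_i h; simp [hc2 k h j (h.trans hj)]
        · rfl
      simp only [Pi.sub_apply, if_neg hji, Finset.sum_apply]
      rw [Finset.sum_congr rfl fun k _ => hz k]
      simp
    · have hL : ∀ j : Fin p, (if h : j < i then a j • gs x j else 0)
          = ∑ k : Fin p, ((if h : j < i then a j • c j h else 0) k) • x k := by
        intro j
        split
        · rename_i h
          rw [hc3 j h, Finset.smul_sum]
          exact Finset.sum_congr rfl fun k _ => by rw [Pi.smul_apply, smul_smul]; rfl
        · simp
      have e1 : ∑ k : Fin p, (if k = i then (1:ℝ) else 0) • x k = x i := by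
        rw [Finset.sum_eq_single i]
        · simp
        · intro j _ hj; simp [hj]
        · simp
      have key : (∑ j : Fin p, if h : j < i then a j • gs x j else 0)
          = ∑ k : Fin p, ((∑ j : Fin p, if h : j < i then a j • c j h else 0) k) • x k := by
        rw [Finset.sum_congr rfl fun j _ => hL j, Finset.sum_comm]
        exact Finset.sum_congr rfl fun k _ => by rw [Finset.sum_apply, Finset.sum_smul]
      have hsplit : ∀ k : Fin p,
          (((fun j => if j = i then (1:ℝ) else 0) -
            ∑ j : Fin p, if h : j < i then a j • c j h else 0) k) • x k
          = (if k = i then (1:ℝ) else 0) • x k -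
            ((∑ j : Fin p, if h : j < i then a j • c j h else 0) k) • x k := by
        intro k; rw [Pi.sub_apply, sub_smul]
      rw [gs]
      rw [Finset.sum_congr rfl fun k _ => hsplit k, Finset.sum_sub_distrib, e1, ← key, ha]

lemma gs_ne_zero {n p : ℕ} {x : Fin p → Fin n → ℝ} (hli : LinearIndependent ℝ x) (i : Fin p) :
    gs x i ⬝ᵥ gs x i ≠ 0 := by
  rw [Ne, dotProduct_self_eq_zero]
  intro h0
  obtain ⟨c, hc1, _, hc3⟩ := gs_combo x i
  have := Fintype.linearIndependent_iff.mp hli c (by rw [← hc3, h0]) i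
  rw [hc1] at this
  exact one_ne_zero this

lemma gs_orth {n p : ℕ} {x : Fin p → Fin n → ℝ} (hli : LinearIndependent ℝ x) :
    ∀ i j : Fin p, j < i → gs x j ⬝ᵥ gs x i = 0 := by
  suffices H : ∀ N : ℕ, ∀ i : Fin p, i.1 = N → ∀ j : Fin p, j < i → gs x j ⬝ᵥ gs x i = 0 from
    fun i => H i.1 i rfl
  intro N
  induction N using Nat.strong_induction_on with
  | _ N IH =>
    intro i hi j hj
    subst hi
    nth_rewrite 2 [gs]
    rw [dotProduct_sub, my_dotProduct_sum _ _ _]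
    have hz : ∀ k : Fin p,
        (gs x j ⬝ᵥ if h : k < i then ((gs x k ⬝ᵥ x i) / (gs x k ⬝ᵥ gs x k)) • gs x k else 0)
        = if k = j then gs x j ⬝ᵥ x i else 0 := by
      intro k
      rcases eq_or_ne k j with rfl | hkj
      · rw [dif_pos hj, if_pos rfl, dotProduct_smul, smul_eq_mul,
          div_mul_cancel₀ _ (gs_ne_zero hli k)]
      · rw [if_neg hkj]
        split
        · rename_i h
          rcases lt_or_gt_of_ne hkj with hlt | hlt
          · rw [dotProduct_smul, show gs x j ⬝ᵥ gs x k = 0 from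
              (dotProduct_comm _ _).trans (IH j.1 hj j rfl k hlt), smul_zero]
          · rw [dotProduct_smul, IH k.1 h k rfl j hlt, smul_zero]
        · exact dotProduct_zero _
    rw [Finset.sum_congr rfl fun k _ => hz k, Finset.sum_ite_eq' Finset.univ j
      (fun _ => gs x j ⬝ᵥ x i)]
    simp

lemma gs_dot_x {n p : ℕ} {x : Fin p → Fin n → ℝ} (hli : LinearIndependent ℝ x)
    (i j : Fin p) (hji : j ≤ i) :
    gs x i ⬝ᵥ x j = if j = i then gs x i ⬝ᵥ gs x i else 0 := by
  have hxj : x j = gs x j + ∑ k : Fin p,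
      if h : k < j then ((gs x k ⬝ᵥ x j) / (gs x k ⬝ᵥ gs x k)) • gs x k else 0 := by
    rw [gs]; ring
  rw [hxj, dotProduct_add, my_dotProduct_sum _ _ _]
  have hz : ∀ k : Fin p,
      (gs x i ⬝ᵥ if h : k < j then ((gs x k ⬝ᵥ x j) / (gs x k ⬝ᵥ gs x k)) • gs x k else 0) = 0 := by
    intro k
    split
    · rename_i h
      rw [dotProduct_smul, show gs x i ⬝ᵥ gs x k = 0 from
        (dotProduct_comm _ _).trans (gs_orth hli i k (h.trans_le hji)), smul_zero]
    · exact dotProduct_zero _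
  rw [Finset.sum_congr rfl fun k _ => hz k, Finset.sum_const_zero, add_zero]
  rcases eq_or_ne j i with rfl | hne
  · rw [if_pos rfl]
  · rw [if_neg hne]
    exact (dotProduct_comm _ _).trans (gs_orth hli i j (lt_of_le_of_ne hji hne))

lemma my_vecMulVec_mulVec {n : ℕ} (w v y : Fin n → ℝ) :
    vecMulVec w v *ᵥ y = (v ⬝ᵥ y) • w := by
  funext i
  simp only [mulVec, dotProduct, vecMulVec_apply, Pi.smul_apply, smul_eq_mul, Finset.mul_sum]
  rw [Finset.sum_mul]
  exact Finset.sum_congr rfl fun k _ => by ring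

theorem second_to_last_coefficient_closed_form {n p : ℕ}
    (X : Matrix (Fin n) (Fin (p + 2)) ℝ) (y : Fin n → ℝ)
    (x : Fin (p + 2) → Fin n → ℝ) (hx : x = fun i k => X k i)
    (hli : LinearIndependent ℝ x)
    (β : Fin (p + 2) → ℝ) (hβ : β = ((Xᵀ * X)⁻¹ * Xᵀ) *ᵥ y)
    (qo : Fin (p + 2) → Fin n → ℝ) (hqo : qo = fun i => (gs x i ⬝ᵥ gs x i)⁻¹ • gs x i) :
    β ⟨p, by omega⟩ = qo ⟨p, by omega⟩ ⬝ᵥ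
      (((1 : Matrix (Fin n) (Fin n) ℝ) - vecMulVec (x (Fin.last (p + 1))) (qo (Fin.last (p + 1)))) *ᵥ y) := by
  classical
  have hqoe : ∀ i, qo i = (gs x i ⬝ᵥ gs x i)⁻¹ • gs x i := fun i => by rw [hqo]
  set ip : Fin (p + 2) := ⟨p, by omega⟩ with hip
  set il : Fin (p + 2) := Fin.last (p + 1) with hil
  have hXv : ∀ w : Fin (p + 2) → ℝ, X *ᵥ w = ∑ j, w j • x j := by
    intro w
    funext k
    simp only [mulVec, dotProduct, Finset.sum_apply, Pi.smul_apply, smul_eq_mul, hx]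
    exact Finset.sum_congr rfl fun j _ => by ring
  have hXtv : ∀ (v : Fin n → ℝ) (i : Fin (p + 2)), (Xᵀ *ᵥ v) i = x i ⬝ᵥ v := by
    intro v i
    simp only [mulVec, dotProduct, transpose_apply, hx]
  have hU : IsUnit (Xᵀ * X) := by
    apply Matrix.mulVec_injective_iff_isUnit.mp
    intro u v huv
    have hw : (Xᵀ * X) *ᵥ (u - v) = 0 := by
      rw [Matrix.mulVec_sub]
      rw [show (Xᵀ * X) *ᵥ u = (Xᵀ * X) *ᵥ v from huv, sub_self]
    have h1 : (X *ᵥ (u - v)) ⬝ᵥ (X *ᵥ (u - v)) = 0 := by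
      have := congrArg (fun z => (u - v) ⬝ᵥ z) hw
      simpa [← Matrix.mulVec_mulVec, dotProduct_mulVec, vecMul_transpose] using this
    have h2 : X *ᵥ (u - v) = 0 := dotProduct_self_eq_zero.mp h1
    have h3 : u - v = 0 := by
      rw [hXv] at h2
      funext j
      exact Fintype.linearIndependent_iff.mp hli _ h2 j
    exact sub_eq_zero.mp h3
  have hnormal : (Xᵀ * X) *ᵥ β = Xᵀ *ᵥ y := by
    rw [hβ, Matrix.mulVec_mulVec, ← Matrix.mul_assoc,
      Matrix.mul_nonsing_inv _ ((Xᵀ * X).isUnit_iff_isUnit_det.mp hU), Matrix.one_mul]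
  have hxr : ∀ i : Fin (p + 2), x i ⬝ᵥ (X *ᵥ β) = x i ⬝ᵥ y := by
    intro i
    have := congrFun hnormal i
    rwa [← Matrix.mulVec_mulVec, hXtv, hXtv] at this
  have hgr : ∀ i : Fin (p + 2), gs x i ⬝ᵥ (X *ᵥ β) = gs x i ⬝ᵥ y := by
    intro i
    obtain ⟨c, _, _, hc3⟩ := gs_combo x i
    rw [hc3, my_sum_dotProduct _ _ _, my_sum_dotProduct _ _ _]
    exact Finset.sum_congr rfl fun j _ => by
      rw [smul_dotProduct, smul_dotProduct, hxr j]
  have hgXb : ∀ i : Fin (p + 2), gs x i ⬝ᵥ (X *ᵥ β) = ∑ j, β j * (gs x i ⬝ᵥ x j) := by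
    intro i
    rw [hXv, my_dotProduct_sum _ _ _]
    exact Finset.sum_congr rfl fun j _ => by rw [dotProduct_smul, smul_eq_mul]
  have hAne : gs x ip ⬝ᵥ gs x ip ≠ 0 := gs_ne_zero hli ip
  have hBne : gs x il ⬝ᵥ gs x il ≠ 0 := gs_ne_zero hli il
  have hne : ip ≠ il := by
    intro h
    have := congrArg Fin.val h
    simp only [hip, hil, Fin.last] at this
    omega
  have eq1 : gs x il ⬝ᵥ y = β il * (gs x il ⬝ᵥ gs x il) := by
    rw [← hgr il, hgXb il, Finset.sum_eq_single il]
    · rw [gs_dot_x hli il il le_rfl, if_pos rfl]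
    · intro j _ hj
      rw [gs_dot_x hli il j (Fin.le_last j), if_neg hj, mul_zero]
    · simp
  have eq2 : gs x ip ⬝ᵥ y = β ip * (gs x ip ⬝ᵥ gs x ip) + β il * (gs x ip ⬝ᵥ x il) := by
    rw [← hgr ip, hgXb ip]
    have hterm : ∀ j : Fin (p + 2), β j * (gs x ip ⬝ᵥ x j)
        = (if j = ip then β ip * (gs x ip ⬝ᵥ gs x ip) else 0)
          + (if j = il then β il * (gs x ip ⬝ᵥ x il) else 0) := by
      intro j
      by_cases hjp : j = ip
      · rw [hjp, if_pos rfl, if_neg hne, gs_dot_x hli ip ip le_rfl, if_pos rfl, add_zero]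
      · by_cases hjl : j = il
        · rw [hjl, if_neg (fun h : il = ip => hne h.symm), if_pos rfl, zero_add]
        · have hjle : j ≤ ip := by
            have h1 : j.1 < p + 2 := j.2
            have h2 : j.1 ≠ p := fun h => hjp (by rw [hip]; exact Fin.ext h)
            have h3 : j.1 ≠ p + 1 := fun h => hjl (by rw [hil]; exact Fin.ext h)
            rw [hip]; exact Fin.mk_le_mk.mpr (by omega)
          rw [if_neg hjp, if_neg hjl, gs_dot_x hli ip j hjle, if_neg hjp, mul_zero, add_zero]
    calc ∑ j, β j * (gs x ip ⬝ᵥ x j)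
        = ∑ j : Fin (p + 2), ((if j = ip then β ip * (gs x ip ⬝ᵥ gs x ip) else 0)
          + (if j = il then β il * (gs x ip ⬝ᵥ x il) else 0)) :=
          Finset.sum_congr rfl fun j _ => hterm j
      _ = β ip * (gs x ip ⬝ᵥ gs x ip) + β il * (gs x ip ⬝ᵥ x il) := by
          rw [Finset.sum_add_distrib, Finset.sum_ite_eq' Finset.univ ip,
            Finset.sum_ite_eq' Finset.univ il]
          simp
  rw [Matrix.sub_mulVec, Matrix.one_mulVec, my_vecMulVec_mulVec, hqoe, hqoe,
    dotProduct_sub, smul_dotProduct, smul_dotProduct, dotProduct_smul,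
    smul_dotProduct, smul_eq_mul, smul_eq_mul, smul_eq_mul, eq1, eq2]
  simp only [smul_eq_mul]
  field_simp
  ring
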